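/- arXiv:1401.5140 — 4 statements merged into one kernel-verified Lean document; each statement's English description precedes it below -/
import Mathlib

section
/- Let m ≥ 2 be an integer, ζ = exp(2πi/m), and let w be an integer with 0 < w < m and gcd(w, m) = 1. Then ∑_{k=1}^{m-1} (1 + ζ^{kw})/(1 - ζ^k) = w - 1. -/
open Finset

/-- For `m ≥ 2`, `ζ = exp(2πi/m)` and `0 < w < m` with `gcd(w,m)=1`,
    `∑_{k=1}^{m-1} (1 + ζ^{kw})/(1 - ζ^k) = w - 1`. -/
theorem sum_one_add_zeta_pow_div_one_sub_zeta_pow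
    (m w : ℕ) (hm : 2 ≤ m) (hw0 : 0 < w) (hwm : w < m) (hcop : Nat.Coprime w m)
    (ζ : ℂ) (hζ : ζ = Complex.exp (2 * Real.pi * Complex.I / m)) :
    ∑ k ∈ Finset.Ico 1 m, (1 + ζ ^ (k * w)) / (1 - ζ ^ k) = (w : ℂ) - 1 := by
  have hm0 : m ≠ 0 := by omega
  have hprim : IsPrimitiveRoot ζ m := by
    rw [hζ]; exact Complex.isPrimitiveRoot_exp m hm0
  have hzm : ζ ^ m = 1 := hprim.pow_eq_one
  have hne : ∀ k, 0 < k → k < m → ζ ^ k ≠ 1 := fun k h1 h2 =>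
    hprim.pow_ne_one_of_pos_of_lt h1.ne' h2
  have hden : ∀ k ∈ Ico 1 m, (1 : ℂ) - ζ ^ k ≠ 0 := by
    intro k hk h
    simp only [mem_Ico] at hk
    exact hne k hk.1 hk.2 (sub_eq_zero.mp h).symm
  -- Lemma A : ∑ 1/(1-ζ^k) = (m-1)/2
  have hA : ∑ k ∈ Ico 1 m, (1:ℂ)/(1 - ζ^k) = ((m:ℂ) - 1)/2 := by
    have hre : ∑ k ∈ Ico 1 m, (1:ℂ)/(1 - ζ^k)
        = ∑ k ∈ Ico 1 m, (1:ℂ)/(1 - ζ^(m-k)) := by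
      apply Finset.sum_nbij' (i := fun k => m - k) (j := fun k => m - k)
      · intro a ha; simp only [mem_Ico] at ha ⊢; omega
      · intro a ha; simp only [mem_Ico] at ha ⊢; omega
      · intro a ha; simp only [mem_Ico] at ha; omega
      · intro a ha; simp only [mem_Ico] at ha; omega
      · intro a ha
        simp only [mem_Ico] at ha
        rw [Nat.sub_sub_self (by omega : a ≤ m)]
    have key : (∑ k ∈ Ico 1 m, (1:ℂ)/(1 - ζ^k)) + (∑ k ∈ Ico 1 m, (1:ℂ)/(1 - ζ^k))
        = (m:ℂ) - 1 := by
      nth_rewrite 2 [hre]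
      rw [← Finset.sum_add_distrib]
      have : ∀ k ∈ Ico 1 m, (1:ℂ)/(1 - ζ^k) + (1:ℂ)/(1 - ζ^(m-k)) = 1 := by
        intro k hk
        simp only [mem_Ico] at hk
        have h1 : (1:ℂ) - ζ^k ≠ 0 := hden k (by simp [mem_Ico]; omega)
        have h2 : (1:ℂ) - ζ^(m-k) ≠ 0 := hden (m-k) (by simp [mem_Ico]; omega)
        have hmul : ζ^k * ζ^(m-k) = 1 := by
          rw [← pow_add]
          have : k + (m - k) = m := by omega
          rw [this, hzm]
        field_simp
        linear_combination -hmul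
      rw [Finset.sum_congr rfl this, Finset.sum_const, Nat.card_Ico]
      rw [nsmul_eq_mul, mul_one, Nat.cast_sub (by omega : 1 ≤ m)]
      push_cast
      ring
    linear_combination key / 2
  -- term rewrite
  have step : ∀ k ∈ Ico 1 m,
      (1 + ζ^(k*w))/(1 - ζ^k) = 2 * ((1:ℂ)/(1-ζ^k)) - ∑ j ∈ range w, (ζ^k)^j := by
    intro k hk
    have h0 := hden k hk
    have hg : (∑ j ∈ range w, (ζ^k)^j) * (ζ^k - 1) = (ζ^k)^w - 1 := geom_sum_mul _ _
    rw [← pow_mul, mul_comm k w] at hg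
    field_simp
    linear_combination -hg
  rw [Finset.sum_congr rfl step, Finset.sum_sub_distrib, ← Finset.mul_sum, hA]
  -- double sum
  have hB : ∑ k ∈ Ico 1 m, ∑ j ∈ range w, (ζ^k)^j = (m:ℂ) - w := by
    rw [Finset.sum_comm]
    have inner : ∀ j ∈ range w, ∑ k ∈ Ico 1 m, (ζ^k)^j
        = if j = 0 then (m:ℂ) - 1 else -1 := by
      intro j hj
      simp only [mem_range] at hj
      rcases Nat.eq_zero_or_pos j with rfl | hjpos
      · simp [Nat.card_Ico, Nat.cast_sub (by omega : 1 ≤ m)]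
      · rw [if_neg (by omega)]
        have hcalc : ∀ k, (ζ^k)^j = (ζ^j)^k := by
          intro k; rw [← pow_mul, mul_comm, pow_mul]
        simp only [hcalc]
        have hxne : ζ^j - 1 ≠ 0 := by
          intro h
          exact hne j hjpos (by omega) (sub_eq_zero.mp h)
        have hfull : ∑ k ∈ range m, (ζ^j)^k = 0 := by
          have := geom_sum_mul (ζ^j) m
          rw [← pow_mul, mul_comm j m, pow_mul, hzm, one_pow, sub_self] at this
          exact (mul_eq_zero.mp this).resolve_right hxne
        rw [Finset.sum_Ico_eq_sub _ (by omega : 1 ≤ m), hfull]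
        simp
    rw [Finset.sum_congr rfl inner]
    have h2 : ∀ j ∈ range w, (if j = 0 then (m:ℂ) - 1 else -1)
        = (if j = 0 then (m:ℂ) else 0) + (-1) := by
      intro j _; split <;> ring
    rw [Finset.sum_congr rfl h2, Finset.sum_add_distrib,
      Finset.sum_ite_eq' (range w) 0 (fun _ => (m:ℂ)),
      if_pos (Finset.mem_range.mpr hw0), Finset.sum_const, Finset.card_range]
    push_cast
    ring
  rw [hB]
  push_cast
  ring
end

section
/- Let m ≥ 2 be an integer, ζ = exp(2πi/m), w an integer coprime to m with 0 < w < m, and let w' be the unique integer with 0 < w' < m and w·w' ≡ 1 (mod m). Then ∑_{k=1}^{m-1} (ζ^{2wk} + ζ^{2k} - 2)/((1 - ζ^k)(1 - ζ^{kw})) = -(w - 1) - (w' - 1) = 2 - w - w'. -/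
open Finset

private lemma pow_congr_mod' {ζ : ℂ} {m : ℕ} (hm : ζ ^ m = 1) {a b : ℕ} (h : a % m = b % m) :
    ζ ^ a = ζ ^ b := by
  have key : ∀ n : ℕ, ζ ^ n = ζ ^ (n % m) := by
    intro n
    conv_lhs => rw [← Nat.div_add_mod n m]
    rw [pow_add, pow_mul, hm, one_pow, one_mul]
  rw [key a, key b, h]

private lemma geo_sum_eq_neg_one' {x : ℂ} {m : ℕ} (hm : 0 < m) (hxm : x ^ m = 1) (hx : x ≠ 1) :
    ∑ k ∈ Ico 1 m, x ^ k = -1 := by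
  have h0 : ∑ k ∈ range m, x ^ k = 0 := by
    rw [geom_sum_eq hx m, hxm, sub_self, zero_div]
  have h1 : ∑ k ∈ range m, x ^ k = x ^ 0 + ∑ k ∈ Ico 1 m, x ^ k := by
    rw [range_eq_Ico, ← Finset.sum_eq_sum_Ico_succ_bot hm]
  rw [h1, pow_zero] at h0
  linear_combination h0

private lemma sum_inv_one_sub' {ζ : ℂ} {m : ℕ} (hm : 2 ≤ m) (hprim : IsPrimitiveRoot ζ m) :
    ∑ k ∈ Ico 1 m, (1 - ζ ^ k)⁻¹ = (m - 1) / 2 := by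
  have hm0 : 0 < m := by omega
  have hrefl : ∑ k ∈ Ico 1 m, (1 - ζ ^ k)⁻¹ = ∑ k ∈ Ico 1 m, (1 - ζ ^ (m - k))⁻¹ := by
    apply Finset.sum_nbij' (fun k => m - k) (fun k => m - k)
    · intro a ha; simp only [mem_Ico] at *; omega
    · intro a ha; simp only [mem_Ico] at *; omega
    · intro a ha; simp only [mem_Ico] at ha; omega
    · intro a ha; simp only [mem_Ico] at ha; omega
    · intro a ha; simp only [mem_Ico] at ha
      rw [show m - (m - a) = a by omega]
  have pair : ∀ k ∈ Ico 1 m, (1 - ζ ^ k)⁻¹ + (1 - ζ ^ (m - k))⁻¹ = 1 := by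
    intro k hk
    rw [mem_Ico] at hk
    have hz1 : ζ ^ k ≠ 1 := hprim.pow_ne_one_of_pos_of_lt (by omega) hk.2
    have hz2 : ζ ^ (m - k) ≠ 1 := hprim.pow_ne_one_of_pos_of_lt (by omega) (by omega)
    have hmul : ζ ^ k * ζ ^ (m - k) = 1 := by
      rw [← pow_add, show k + (m - k) = m by omega, hprim.pow_eq_one]
    have h1 : 1 - ζ ^ k ≠ 0 := sub_ne_zero.mpr (Ne.symm hz1)
    have h2 : 1 - ζ ^ (m - k) ≠ 0 := sub_ne_zero.mpr (Ne.symm hz2)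
    field_simp
    linear_combination -hmul
  have h2S : (2 : ℂ) * ∑ k ∈ Ico 1 m, (1 - ζ ^ k)⁻¹ = m - 1 := by
    have hc := Finset.sum_congr rfl pair
    rw [Finset.sum_add_distrib, ← hrefl, Finset.sum_const, nsmul_eq_mul, Nat.card_Ico] at hc
    push_cast [Nat.cast_sub (by omega : 1 ≤ m)] at hc ⊢
    linear_combination hc
  linear_combination h2S / 2

private lemma sum_key' {ζ : ℂ} {m a : ℕ} (hm : 2 ≤ m) (hprim : IsPrimitiveRoot ζ m)
    (ha0 : 0 < a) (ham : a < m) :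
    ∑ k ∈ Ico 1 m, (1 + ζ ^ (a * k)) / (1 - ζ ^ k) = a - 1 := by
  have hm0 : 0 < m := by omega
  have hsplit : ∀ k ∈ Ico 1 m,
      (1 + ζ ^ (a * k)) / (1 - ζ ^ k) = 2 * (1 - ζ ^ k)⁻¹ - ∑ j ∈ range a, (ζ ^ k) ^ j := by
    intro k hk
    rw [mem_Ico] at hk
    have hz1 : ζ ^ k ≠ 1 := hprim.pow_ne_one_of_pos_of_lt (by omega) hk.2
    have h1 : 1 - ζ ^ k ≠ 0 := sub_ne_zero.mpr (Ne.symm hz1)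
    have h1' : ζ ^ k - 1 ≠ 0 := sub_ne_zero.mpr hz1
    rw [geom_sum_eq hz1 a, mul_comm a k, pow_mul]
    field_simp
    ring
  rw [Finset.sum_congr rfl hsplit, Finset.sum_sub_distrib, ← Finset.mul_sum,
    sum_inv_one_sub' hm hprim, Finset.sum_comm]
  have hinner : ∀ j ∈ range a, ∑ k ∈ Ico 1 m, (ζ ^ k) ^ j =
      if j = 0 then (m : ℂ) - 1 else -1 := by
    intro j hj
    rw [mem_range] at hj
    by_cases h0 : j = 0
    · simp [h0, Nat.cast_sub (by omega : 1 ≤ m)]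
    · simp only [h0, if_false]
      have hj1 : 0 < j := Nat.pos_of_ne_zero h0
      have hx1 : ζ ^ j ≠ 1 := hprim.pow_ne_one_of_pos_of_lt (by omega) (by omega)
      have hxm : (ζ ^ j) ^ m = 1 := by
        rw [← pow_mul, mul_comm, pow_mul, hprim.pow_eq_one, one_pow]
      have hg := geo_sum_eq_neg_one' hm0 hxm hx1
      calc ∑ k ∈ Ico 1 m, (ζ ^ k) ^ j = ∑ k ∈ Ico 1 m, (ζ ^ j) ^ k := by
              apply Finset.sum_congr rfl; intro x _; rw [← pow_mul, ← pow_mul, mul_comm]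
        _ = -1 := hg
  rw [Finset.sum_congr rfl hinner]
  have hs : (∑ j ∈ range a, if j = 0 then (m : ℂ) - 1 else -1)
      = ∑ j ∈ range a, ((if j = 0 then (m : ℂ) else 0) + (-1)) := by
    apply Finset.sum_congr rfl
    intro x _
    split <;> ring
  rw [hs, Finset.sum_add_distrib, Finset.sum_ite_eq' (range a) 0 (fun _ => (m : ℂ)),
    Finset.sum_const, Finset.card_range]
  simp only [Finset.mem_range, ha0, if_pos, nsmul_eq_mul]
  ring

private lemma term_split' (x y : ℂ) (hx : 1 - x ≠ 0) (hy : 1 - y ≠ 0) :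
    (y ^ 2 + x ^ 2 - 2) / ((1 - x) * (1 - y)) = -((1 + y) / (1 - x)) - (1 + x) / (1 - y) := by
  field_simp
  ring

/-- For `m ≥ 2`, `ζ = exp(2πi/m)`, `w` coprime to `m` with `0 < w < m`,
    and `w'` the inverse of `w` mod `m` with `0 < w' < m`,
    `∑_{k=1}^{m-1} (ζ^{2wk} + ζ^{2k} - 2)/((1-ζ^k)(1-ζ^{kw})) = 2 - w - w'`. -/
theorem sum_zeta_identity_two_sub_w_sub_w'
    (m w w' : ℕ) (hm : 2 ≤ m) (hw0 : 0 < w) (hwm : w < m) (hcop : Nat.Coprime w m)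
    (hw'0 : 0 < w') (hw'm : w' < m) (hww' : w * w' ≡ 1 [MOD m])
    (ζ : ℂ) (hζ : ζ = Complex.exp (2 * Real.pi * Complex.I / m)) :
    ∑ k ∈ Finset.Ico 1 m,
      (ζ ^ (2 * w * k) + ζ ^ (2 * k) - 2) / ((1 - ζ ^ k) * (1 - ζ ^ (k * w))) =
      2 - (w : ℂ) - (w' : ℂ) := by
  have hm0 : 0 < m := by omega
  have hprim : IsPrimitiveRoot ζ m := by
    rw [hζ]; exact Complex.isPrimitiveRoot_exp m (by omega)
  have hpow1 : ζ ^ m = 1 := hprim.pow_eq_one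
  have hw'w : w' * w ≡ 1 [MOD m] := by rwa [mul_comm] at hww'
  have hcop' : Nat.Coprime w' m := by
    have h1 : Nat.gcd (w * w') m = Nat.gcd 1 m := hww'.gcd_eq
    have h2 : Nat.Coprime (w * w') m := by
      rw [Nat.Coprime, h1, Nat.gcd_one_left]
    exact Nat.Coprime.coprime_dvd_left (dvd_mul_left w' w) h2
  -- denominators nonzero
  have hndk : ∀ k ∈ Finset.Ico 1 m, ζ ^ k ≠ 1 := by
    intro k hk; rw [Finset.mem_Ico] at hk
    exact hprim.pow_ne_one_of_pos_of_lt (by omega) hk.2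
  have hndkw : ∀ k ∈ Finset.Ico 1 m, ζ ^ (w * k) ≠ 1 := by
    intro k hk; rw [Finset.mem_Ico] at hk
    intro h
    have hdvd : m ∣ w * k := (hprim.pow_eq_one_iff_dvd (w * k)).mp h
    have hk' : m ∣ k := (Nat.Coprime.dvd_of_dvd_mul_left (hcop.symm)) hdvd
    exact absurd (Nat.le_of_dvd (by omega) hk') (by omega)
  -- per-term rewrite
  have hterm : ∀ k ∈ Finset.Ico 1 m,
      (ζ ^ (2 * w * k) + ζ ^ (2 * k) - 2) / ((1 - ζ ^ k) * (1 - ζ ^ (k * w))) =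
        -((1 + ζ ^ (w * k)) / (1 - ζ ^ k)) - (1 + ζ ^ k) / (1 - ζ ^ (k * w)) := by
    intro k hk
    have h1 : 1 - ζ ^ k ≠ 0 := sub_ne_zero.mpr (Ne.symm (hndk k hk))
    have h2 : 1 - ζ ^ (w * k) ≠ 0 := sub_ne_zero.mpr (Ne.symm (hndkw k hk))
    have e1 : ζ ^ (2 * w * k) = (ζ ^ (w * k)) ^ 2 := by
      rw [← pow_mul]; congr 1; ring
    have e2 : ζ ^ (2 * k) = (ζ ^ k) ^ 2 := by
      rw [← pow_mul]; congr 1; ring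
    have e3 : ζ ^ (k * w) = ζ ^ (w * k) := by rw [mul_comm k w]
    rw [e1, e2, e3]
    exact term_split' (ζ ^ k) (ζ ^ (w * k)) h1 h2
  rw [Finset.sum_congr rfl hterm, Finset.sum_sub_distrib, Finset.sum_neg_distrib]
  have hA : ∑ k ∈ Finset.Ico 1 m, (1 + ζ ^ (w * k)) / (1 - ζ ^ k) = (w : ℂ) - 1 :=
    sum_key' hm hprim hw0 hwm
  have hB : ∑ k ∈ Finset.Ico 1 m, (1 + ζ ^ k) / (1 - ζ ^ (k * w)) = (w' : ℂ) - 1 := by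
    have hre : ∑ k ∈ Finset.Ico 1 m, (1 + ζ ^ k) / (1 - ζ ^ (k * w)) =
        ∑ k ∈ Finset.Ico 1 m, (1 + ζ ^ (w' * k)) / (1 - ζ ^ k) := by
      apply Finset.sum_nbij' (fun k => w * k % m) (fun k => w' * k % m)
      · intro a ha
        rw [Finset.mem_Ico] at *
        refine ⟨?_, Nat.mod_lt _ hm0⟩
        rcases Nat.eq_zero_or_pos (w * a % m) with h0 | h0
        · exfalso
          have hdvd : m ∣ w * a := Nat.dvd_of_mod_eq_zero h0
          have hma : m ∣ a := (Nat.Coprime.dvd_of_dvd_mul_left (hcop.symm)) hdvd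
          exact absurd (Nat.le_of_dvd (by omega) hma) (by omega)
        · exact h0
      · intro a ha
        rw [Finset.mem_Ico] at *
        refine ⟨?_, Nat.mod_lt _ hm0⟩
        rcases Nat.eq_zero_or_pos (w' * a % m) with h0 | h0
        · exfalso
          have hdvd : m ∣ w' * a := Nat.dvd_of_mod_eq_zero h0
          have hma : m ∣ a := (Nat.Coprime.dvd_of_dvd_mul_left (hcop'.symm)) hdvd
          exact absurd (Nat.le_of_dvd (by omega) hma) (by omega)
        · exact h0
      · intro a ha
        rw [Finset.mem_Ico] at ha
        have e1 : w' * (w * a % m) ≡ w' * (w * a) [MOD m] :=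
          Nat.ModEq.mul_left w' (Nat.mod_modEq (w * a) m)
        have e2 : w' * (w * a) ≡ a [MOD m] := by
          calc w' * (w * a) = w' * w * a := by ring
            _ ≡ 1 * a [MOD m] := hw'w.mul_right a
            _ = a := one_mul a
        have := (e1.trans e2)
        unfold Nat.ModEq at this
        rw [Nat.mod_eq_of_lt ha.2] at this
        simpa using this
      · intro a ha
        rw [Finset.mem_Ico] at ha
        have e1 : w * (w' * a % m) ≡ w * (w' * a) [MOD m] :=
          Nat.ModEq.mul_left w (Nat.mod_modEq (w' * a) m)
        have e2 : w * (w' * a) ≡ a [MOD m] := by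
          calc w * (w' * a) = w * w' * a := by ring
            _ ≡ 1 * a [MOD m] := hww'.mul_right a
            _ = a := one_mul a
        have := (e1.trans e2)
        unfold Nat.ModEq at this
        rw [Nat.mod_eq_of_lt ha.2] at this
        simpa using this
      · intro a ha
        rw [Finset.mem_Ico] at ha
        have e1 : ζ ^ (a * w) = ζ ^ (w * a % m) := by
          apply pow_congr_mod' hpow1
          rw [Nat.mod_mod_of_dvd _ dvd_rfl, mul_comm a w]
        have e2 : ζ ^ a = ζ ^ (w' * (w * a % m)) := by
          apply pow_congr_mod' hpow1
          have e3 : w' * (w * a % m) ≡ w' * (w * a) [MOD m] :=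
            Nat.ModEq.mul_left w' (Nat.mod_modEq (w * a) m)
          have e4 : w' * (w * a) ≡ a [MOD m] := by
            calc w' * (w * a) = w' * w * a := by ring
              _ ≡ 1 * a [MOD m] := hw'w.mul_right a
              _ = a := one_mul a
          exact ((e3.trans e4).symm : Nat.ModEq m a _)
        rw [← e1, ← e2]
    rw [hre]
    exact sum_key' hm hprim hw'0 hw'm
  rw [hA, hB]
  ring
end

section
/- For integers m ≥ 2 and w with 0 < w < m and gcd(w, m) = 1, define the Dedekind sum s(w; m) = (1/(4m)) ∑_{k=1}^{m-1} cot(πk/m) cot(πkw/m). Then 6m·s(w; m) is an integer. -/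
/-- The Dedekind sum `s(w; m) = (1/(4m)) ∑_{k=1}^{m-1} cot(πk/m) cot(πkw/m)`. -/
noncomputable def dedekindSum (w m : ℕ) : ℝ :=
  (1 / (4 * (m : ℝ))) *
    ∑ k ∈ Finset.Ico 1 m,
      Real.cot (Real.pi * k / m) * Real.cot (Real.pi * (k * w) / m)


open Finset Complex

lemma aux_sum_mul_pow (z : ℂ) (n : ℕ) :
    (z - 1) * ∑ a ∈ Finset.range n, (a : ℂ) * z ^ a
      = n * z ^ n - (∑ a ∈ Finset.range n, z ^ a) - z ^ n + 1 := by
  induction n with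
  | zero => simp
  | succ n ih =>
      rw [Finset.sum_range_succ, Finset.sum_range_succ]
      push_cast
      linear_combination ih

lemma aux_six_sum_sq (n : ℕ) :
    6 * ∑ i ∈ Finset.range n, (i : ℤ) ^ 2 = n * (n - 1) * (2 * n - 1) := by
  induction n with
  | zero => simp
  | succ n ih =>
      rw [Finset.sum_range_succ]
      push_cast
      push_cast at ih
      linear_combination ih

lemma aux_ne_one (m j : ℕ) (hm : 2 ≤ m) (hj : ¬ m ∣ j) :
    Complex.exp (2 * Real.pi * Complex.I / m) ^ j ≠ 1 := by
  have hmC : (m : ℂ) ≠ 0 := Nat.cast_ne_zero.mpr (by omega)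
  rw [← Complex.exp_nat_mul]
  intro h
  rw [Complex.exp_eq_one_iff] at h
  obtain ⟨n, hn⟩ := h
  have h2πI : (2 : ℂ) * Real.pi * Complex.I ≠ 0 := by
    simp [Real.pi_ne_zero, Complex.I_ne_zero, Complex.ofReal_ne_zero]
  have h3 : ((j : ℂ) - (n : ℂ) * m) * (2 * Real.pi * Complex.I) = 0 := by
    field_simp at hn
    first
      | linear_combination hn
      | linear_combination (2 * (Real.pi : ℂ) * Complex.I) * hn
  rcases mul_eq_zero.mp h3 with h4 | h4
  · have h5 : (j : ℂ) = (n : ℂ) * m := by linear_combination h4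
    have hjz : (j : ℤ) = n * m := by exact_mod_cast h5
    exact hj (Int.natCast_dvd_natCast.mp ⟨n, by rw [hjz]; ring⟩)
  · exact h2πI h4

lemma aux_cot (m j : ℕ) (hm : 2 ≤ m) (hj : ¬ m ∣ j) :
    (Real.cot (Real.pi * j / m) : ℂ)
      = Complex.I * ((Complex.exp (2 * Real.pi * Complex.I / m) ^ j + 1)
        / (Complex.exp (2 * Real.pi * Complex.I / m) ^ j - 1)) := by
  have hmR : (m : ℝ) ≠ 0 := by positivity
  have hmC : (m : ℂ) ≠ 0 := Nat.cast_ne_zero.mpr (by omega)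
  set θ : ℝ := Real.pi * j / m with hθ
  set u : ℂ := Complex.exp (θ * Complex.I) with hu
  set v : ℂ := Complex.exp (-(θ : ℂ) * Complex.I) with hv
  have huv : u * v = 1 := by rw [hu, hv, ← Complex.exp_add]; ring_nf; exact Complex.exp_zero
  have hu2 : u ^ 2 = Complex.exp (2 * Real.pi * Complex.I / m) ^ j := by
    rw [← Complex.exp_nat_mul, ← Complex.exp_nat_mul]
    congr 1
    push_cast [hθ]
    field_simp
  have hz1 : Complex.exp (2 * Real.pi * Complex.I / m) ^ j ≠ 1 := aux_ne_one m j hm hj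
  have hsinR : Real.sin θ ≠ 0 := by
    intro h
    rw [Real.sin_eq_zero_iff] at h
    obtain ⟨n, hn⟩ := h
    have hπ : Real.pi ≠ 0 := Real.pi_ne_zero
    have h5 : (n : ℝ) * m = j := by
      rw [hθ] at hn
      field_simp at hn
      apply mul_left_cancel₀ hπ
      linear_combination Real.pi * hn
    have hjz : (j : ℤ) = n * m := by exact_mod_cast h5.symm
    exact hj (Int.natCast_dvd_natCast.mp ⟨n, by rw [hjz]; ring⟩)
  have hsz : Complex.sin (θ : ℂ) ≠ 0 := by
    rw [← Complex.ofReal_sin]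
    exact_mod_cast Complex.ofReal_ne_zero.mpr hsinR
  have hden : Complex.exp (2 * Real.pi * Complex.I / m) ^ j - 1 ≠ 0 := sub_ne_zero.mpr hz1
  have hc : 2 * Complex.cos (θ : ℂ) = u + v := Complex.two_cos θ
  have hs : 2 * Complex.sin (θ : ℂ) = (v - u) * Complex.I := Complex.two_sin θ
  rw [Real.cot_eq_cos_div_sin]
  push_cast
  rw [← mul_div_assoc, div_eq_div_iff hsz hden, ← hu2]
  linear_combination ((u^2-1)/2) * hc - (Complex.I*(u^2+1)/2) * hs + u * huv
    - ((u^2+1)*(v-u)/2) * Complex.I_sq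

lemma aux_pow_m (m : ℕ) (hm : 2 ≤ m) :
    Complex.exp (2 * Real.pi * Complex.I / m) ^ m = 1 := by
  have hmC : (m : ℂ) ≠ 0 := Nat.cast_ne_zero.mpr (by omega)
  rw [← Complex.exp_nat_mul]
  rw [show (m : ℂ) * (2 * Real.pi * Complex.I / m) = 2 * Real.pi * Complex.I by
    field_simp]
  exact Complex.exp_two_pi_mul_I

lemma aux_orth (m j : ℕ) (hm : 2 ≤ m) :
    ∑ k ∈ Finset.range m, (Complex.exp (2 * Real.pi * Complex.I / m) ^ j) ^ k
      = if m ∣ j then (m : ℂ) else 0 := by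
  by_cases h : m ∣ j
  · obtain ⟨t, rfl⟩ := h
    simp [pow_mul, aux_pow_m m hm]
  · rw [if_neg h, geom_sum_eq (aux_ne_one m j hm h)]
    rw [← pow_mul, mul_comm j m, pow_mul, aux_pow_m m hm, one_pow]
    simp

lemma aux_expand (m j : ℕ) (hm : 2 ≤ m) (hj : ¬ m ∣ j) :
    (Complex.exp (2 * Real.pi * Complex.I / m) ^ j + 1)
      / (Complex.exp (2 * Real.pi * Complex.I / m) ^ j - 1)
    = 1 + (2 / (m : ℂ)) *
        ∑ a ∈ Finset.range m, (a : ℂ) * (Complex.exp (2 * Real.pi * Complex.I / m) ^ j) ^ a := by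
  have hmC : (m : ℂ) ≠ 0 := Nat.cast_ne_zero.mpr (by omega)
  set z : ℂ := Complex.exp (2 * Real.pi * Complex.I / m) ^ j with hz
  have hzm : z ^ m = 1 := by
    rw [hz, ← pow_mul, mul_comm j m, pow_mul, aux_pow_m m hm, one_pow]
  have hgeom : ∑ a ∈ Finset.range m, z ^ a = 0 := by
    have := aux_orth m j hm
    rw [if_neg hj] at this
    exact this
  have hkey : (z - 1) * ∑ a ∈ Finset.range m, (a : ℂ) * z ^ a = m := by
    rw [aux_sum_mul_pow, hzm, hgeom]
    ring
  have hden : z - 1 ≠ 0 := sub_ne_zero.mpr (aux_ne_one m j hm hj)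
  have hS : ∑ a ∈ Finset.range m, (a : ℂ) * z ^ a = (m : ℂ) / (z - 1) := by
    rw [eq_div_iff hden]; linear_combination hkey
  rw [hS, div_eq_iff hden]
  field_simp
  ring

lemma aux_split {M : Type*} [AddCommMonoid M] (m : ℕ) (hm : 0 < m) (f : ℕ → M) :
    ∑ k ∈ Finset.range m, f k = f 0 + ∑ k ∈ Finset.Ico 1 m, f k :=
  by rw [Finset.range_eq_Ico]; exact Finset.sum_eq_sum_Ico_succ_bot hm f

lemma aux_unique (m w b a : ℕ) (hm : 2 ≤ m) (ha : a < m) :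
    (m ∣ (a + w * b)) ↔ a = (m - w * b % m) % m := by
  have hm0 : 0 < m := by omega
  set r := w * b % m with hr
  have hrlt : r < m := Nat.mod_lt _ hm0
  have h1 : (a + w * b) % m = (a + r) % m := by
    conv_lhs => rw [Nat.add_mod]
    rw [← hr, Nat.mod_eq_of_lt ha]
  rw [Nat.dvd_iff_mod_eq_zero, h1]
  rcases Nat.eq_zero_or_pos r with h0 | h0
  · rw [h0, Nat.sub_zero, Nat.mod_self, add_zero, Nat.mod_eq_of_lt ha]
  · rw [Nat.mod_eq_of_lt (show m - r < m by omega)]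
    rcases Nat.lt_or_ge (a + r) m with h | h
    · rw [Nat.mod_eq_of_lt h]; omega
    · rw [Nat.mod_eq_sub_mod h, Nat.mod_eq_of_lt (by omega)]; omega

lemma aux_sum1 (m c : ℕ) (hm : 2 ≤ m) (hcop : Nat.Coprime c m) :
    ∑ k ∈ Finset.range m, ∑ a ∈ Finset.range m,
      (a : ℂ) * ((Complex.exp (2 * Real.pi * Complex.I / m)) ^ (k * c)) ^ a = 0 := by
  set Z : ℂ := Complex.exp (2 * Real.pi * Complex.I / m) with hZ
  rw [Finset.sum_comm]
  apply Finset.sum_eq_zero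
  intro a ha
  have hrw : ∀ k, ((Z ^ (k * c)) ^ a : ℂ) = (Z ^ (c * a)) ^ k := by
    intro k
    rw [← pow_mul, ← pow_mul, show k * c * a = c * a * k by ring]
  calc ∑ k ∈ Finset.range m, (a : ℂ) * (Z ^ (k * c)) ^ a
      = (a : ℂ) * ∑ k ∈ Finset.range m, (Z ^ (c * a)) ^ k := by
        rw [Finset.mul_sum]
        exact Finset.sum_congr rfl fun k _ => by rw [hrw]
    _ = 0 := by
        rw [aux_orth m (c * a) hm]
        rcases Nat.eq_zero_or_pos a with rfl | hpos
        · simp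
        · rw [if_neg, mul_zero]
          intro hd
          have hma : m ∣ a := (hcop.symm).dvd_of_dvd_mul_left hd
          have := Nat.le_of_dvd hpos hma
          simp only [Finset.mem_range] at ha
          omega

lemma aux_sum3 (m w : ℕ) (hm : 2 ≤ m) :
    ∑ k ∈ Finset.range m,
      ((∑ a ∈ Finset.range m,
          (a : ℂ) * ((Complex.exp (2 * Real.pi * Complex.I / m)) ^ k) ^ a) *
       (∑ b ∈ Finset.range m,
          (b : ℂ) * ((Complex.exp (2 * Real.pi * Complex.I / m)) ^ (k * w)) ^ b))
    = (m : ℂ) * ∑ b ∈ Finset.range m, (((m - w * b % m) % m : ℕ) : ℂ) * b := by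
  set Z : ℂ := Complex.exp (2 * Real.pi * Complex.I / m) with hZ
  have hm0 : 0 < m := by omega
  have step1 : ∀ k, (∑ a ∈ Finset.range m, (a : ℂ) * (Z ^ k) ^ a) *
      (∑ b ∈ Finset.range m, (b : ℂ) * (Z ^ (k * w)) ^ b)
      = ∑ b ∈ Finset.range m, ∑ a ∈ Finset.range m,
          ((a : ℂ) * b) * (Z ^ (a + w * b)) ^ k := by
    intro k
    rw [mul_comm, Finset.sum_mul_sum]
    refine Finset.sum_congr rfl fun b _ => Finset.sum_congr rfl fun a _ => ?_
    rw [← pow_mul, ← pow_mul, ← pow_mul,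
      show (a + w * b) * k = k * a + k * (w * b) by ring, pow_add,
      show k * w * b = k * (w * b) by ring]
    ring
  calc ∑ k ∈ Finset.range m,
        ((∑ a ∈ Finset.range m, (a : ℂ) * (Z ^ k) ^ a) *
         (∑ b ∈ Finset.range m, (b : ℂ) * (Z ^ (k * w)) ^ b))
      = ∑ k ∈ Finset.range m, ∑ b ∈ Finset.range m, ∑ a ∈ Finset.range m,
          ((a : ℂ) * b) * (Z ^ (a + w * b)) ^ k :=
        Finset.sum_congr rfl fun k _ => step1 k
    _ = ∑ b ∈ Finset.range m, ∑ a ∈ Finset.range m, ∑ k ∈ Finset.range m,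
          ((a : ℂ) * b) * (Z ^ (a + w * b)) ^ k := by
        rw [Finset.sum_comm]
        exact Finset.sum_congr rfl fun b _ => Finset.sum_comm
    _ = ∑ b ∈ Finset.range m, ∑ a ∈ Finset.range m,
          ((a : ℂ) * b) * (if m ∣ (a + w * b) then (m : ℂ) else 0) := by
        refine Finset.sum_congr rfl fun b _ => Finset.sum_congr rfl fun a _ => ?_
        rw [← Finset.mul_sum, aux_orth m (a + w * b) hm]
    _ = ∑ b ∈ Finset.range m, (((m - w * b % m) % m : ℕ) : ℂ) * b * m := by
        refine Finset.sum_congr rfl fun b _ => ?_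
        have ha₀lt : (m - w * b % m) % m < m := Nat.mod_lt _ hm0
        refine Finset.sum_eq_single_of_mem ((m - w * b % m) % m)
          (Finset.mem_range.mpr ha₀lt) (fun a ha hne => ?_) |>.trans ?_
        · rw [if_neg, mul_zero]
          intro hd
          exact hne ((aux_unique m w b a hm (Finset.mem_range.mp ha)).mp hd)
        · rw [if_pos ((aux_unique m w b _ hm ha₀lt).mpr rfl)]
    _ = (m : ℂ) * ∑ b ∈ Finset.range m, (((m - w * b % m) % m : ℕ) : ℂ) * b := by
        rw [Finset.mul_sum]
        exact Finset.sum_congr rfl fun b _ => by ring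

lemma aux_main (m w : ℕ) (hm : 2 ≤ m) (hw0 : 0 < w) (hwm : w < m) (hcop : Nat.Coprime w m) :
    ∑ k ∈ Finset.Ico 1 m,
      Real.cot (Real.pi * k / m) * Real.cot (Real.pi * (k * w : ℕ) / m)
    = 4 * ((∑ b ∈ Finset.Ico 1 m, (w * b % m) * b : ℕ) : ℝ) / m - m^2 + m := by
  have hm0 : 0 < m := by omega
  have hmC : (m : ℂ) ≠ 0 := Nat.cast_ne_zero.mpr (by omega)
  have hmR : (m : ℝ) ≠ 0 := Nat.cast_ne_zero.mpr (by omega)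
  set Z : ℂ := Complex.exp (2 * Real.pi * Complex.I / m) with hZ
  set A : ℕ → ℂ := fun j => ∑ a ∈ Finset.range m, (a : ℂ) * (Z ^ j) ^ a with hA
  set G : ℂ := ∑ a ∈ Finset.range m, (a : ℂ) with hG
  set NC : ℂ := ∑ b ∈ Finset.Ico 1 m, ((w * b % m : ℕ) : ℂ) * b with hNC
  -- divisibility facts
  have hknd : ∀ k ∈ Finset.Ico 1 m, ¬ m ∣ k := by
    intro k hk hd
    simp only [Finset.mem_Ico] at hk
    exact absurd (Nat.le_of_dvd (by omega) hd) (by omega)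
  have hkwnd : ∀ k ∈ Finset.Ico 1 m, ¬ m ∣ k * w := by
    intro k hk hd
    exact hknd k hk ((hcop.symm).dvd_of_dvd_mul_right hd)
  -- value of G
  have hGval : G = ((m : ℂ) ^ 2 - m) / 2 := by
    have h := Finset.sum_range_id_mul_two m
    have hc := congrArg (Nat.cast : ℕ → ℂ) h
    push_cast [Nat.cast_sub (show 1 ≤ m by omega)] at hc
    rw [hG]
    field_simp
    linear_combination hc
  have hA0 : A 0 = G := by
    rw [hA, hG]
    simp
  -- Ico sums
  have hIco1 : ∑ k ∈ Finset.Ico 1 m, A k = -G := by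
    have h := aux_sum1 m 1 hm (Nat.coprime_one_left m)
    simp only [mul_one] at h
    rw [aux_split m hm0 (fun k => A k)] at h
    rw [hA0] at h  -- might fail shape; adjust
    linear_combination h
  have hIco2 : ∑ k ∈ Finset.Ico 1 m, A (k * w) = -G := by
    have h := aux_sum1 m w hm hcop
    rw [aux_split m hm0 (fun k => A (k * w))] at h
    simp only [zero_mul, hA0] at h
    linear_combination h
  have hIco3 : ∑ k ∈ Finset.Ico 1 m, A k * A (k * w)
      = (m : ℂ) * ∑ b ∈ Finset.range m, (((m - w * b % m) % m : ℕ) : ℂ) * b - G ^ 2 := by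
    have h := aux_sum3 m w hm
    rw [aux_split m hm0 (fun k => A k * A (k * w))] at h
    simp only [zero_mul, hA0] at h
    linear_combination h
  -- rewrite the a₀ sum
  have hb0 : ∑ b ∈ Finset.range m, (((m - w * b % m) % m : ℕ) : ℂ) * b
      = (m : ℂ) * G - NC := by
    rw [aux_split m hm0 (fun b => (((m - w * b % m) % m : ℕ) : ℂ) * b)]
    have hGIco : G = ∑ b ∈ Finset.Ico 1 m, (b : ℂ) := by
      rw [hG, aux_split m hm0 (fun b => (b : ℂ))]; simp
    have hterm : ∀ b ∈ Finset.Ico 1 m,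
        (((m - w * b % m) % m : ℕ) : ℂ) * b = (m : ℂ) * b - ((w * b % m : ℕ) : ℂ) * b := by
      intro b hb
      simp only [Finset.mem_Ico] at hb
      have hnd : ¬ m ∣ w * b := by
        intro hd
        have : m ∣ b := (hcop.symm).dvd_of_dvd_mul_left hd
        exact absurd (Nat.le_of_dvd (by omega) this) (by omega)
      have hrpos : 0 < w * b % m := Nat.pos_of_ne_zero fun h => hnd (Nat.dvd_of_mod_eq_zero h)
      have hrlt : w * b % m < m := Nat.mod_lt _ hm0
      rw [Nat.mod_eq_of_lt (show m - w * b % m < m by omega),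
        Nat.cast_sub (le_of_lt hrlt)]
      ring
    rw [Finset.sum_congr rfl hterm, Finset.sum_sub_distrib, ← Finset.mul_sum, ← hGIco, hNC]
    simp
  -- the per-term cotangent identity
  have hterm : ∀ k ∈ Finset.Ico 1 m,
      ((Real.cot (Real.pi * k / m) * Real.cot (Real.pi * (k * w : ℕ) / m) : ℝ) : ℂ)
        = -((1 + (2 / m) * A k) * (1 + (2 / m) * A (k * w))) := by
    intro k hk
    rw [Complex.ofReal_mul, aux_cot m k hm (hknd k hk), aux_cot m (k * w) hm (hkwnd k hk),
      aux_expand m k hm (hknd k hk), aux_expand m (k * w) hm (hkwnd k hk)]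
    simp only [hA]
    linear_combination ((1 + (2/(m:ℂ)) * ∑ a ∈ Finset.range m, (a:ℂ) * (Z ^ k) ^ a) *
      (1 + (2/(m:ℂ)) * ∑ a ∈ Finset.range m, (a:ℂ) * (Z ^ (k * w)) ^ a)) * Complex.I_sq
  -- sum it
  have hsum : ((∑ k ∈ Finset.Ico 1 m,
      Real.cot (Real.pi * k / m) * Real.cot (Real.pi * (k * w : ℕ) / m) : ℝ) : ℂ)
      = -∑ k ∈ Finset.Ico 1 m, (1 + (2 / m) * A k) * (1 + (2 / m) * A (k * w)) := by
    rw [Complex.ofReal_sum, ← Finset.sum_neg_distrib]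
    exact Finset.sum_congr rfl fun k hk => hterm k hk
  have hexpand : ∑ k ∈ Finset.Ico 1 m, (1 + (2 / (m:ℂ)) * A k) * (1 + (2 / m) * A (k * w))
      = (((m : ℕ) - 1 : ℕ) : ℂ) + (2 / m) * (∑ k ∈ Finset.Ico 1 m, A k)
        + (2 / m) * (∑ k ∈ Finset.Ico 1 m, A (k * w))
        + (2 / m) ^ 2 * (∑ k ∈ Finset.Ico 1 m, A k * A (k * w)) := by
    have h1 : ∀ k ∈ Finset.Ico 1 m, (1 + (2 / (m:ℂ)) * A k) * (1 + (2 / m) * A (k * w))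
        = 1 + ((2 / m) * A k + ((2 / m) * A (k * w) + (2 / m) ^ 2 * (A k * A (k * w)))) :=
      fun k _ => by ring
    rw [Finset.sum_congr rfl h1, Finset.sum_add_distrib, Finset.sum_add_distrib,
      Finset.sum_add_distrib, ← Finset.mul_sum, ← Finset.mul_sum, ← Finset.mul_sum,
      Finset.sum_const, Nat.card_Ico]
    push_cast
    ring
  -- final complex identity
  have hfinal : ((∑ k ∈ Finset.Ico 1 m,
      Real.cot (Real.pi * k / m) * Real.cot (Real.pi * (k * w : ℕ) / m) : ℝ) : ℂ)
      = 4 * NC / m - m ^ 2 + m := by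
    rw [hsum, hexpand, hIco1, hIco2, hIco3, hb0, hGval,
      Nat.cast_sub (show 1 ≤ m by omega)]
    push_cast
    field_simp
    ring
  -- descend to ℝ
  have := hfinal
  rw [show ((4 : ℂ) * NC / m - m ^ 2 + m)
      = ((4 * ((∑ b ∈ Finset.Ico 1 m, (w * b % m) * b : ℕ) : ℝ) / m - m^2 + m : ℝ) : ℂ) by
    rw [hNC]; push_cast; ring] at this
  exact_mod_cast this

/-- For `m ≥ 2` and `0 < w < m` with `gcd(w,m)=1`,
    `6m·s(w;m)` is an integer. -/
theorem six_m_mul_dedekindSum_isInt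
    (m w : ℕ) (hm : 2 ≤ m) (hw0 : 0 < w) (hwm : w < m) (hcop : Nat.Coprime w m) :
    ∃ z : ℤ, 6 * (m : ℝ) * dedekindSum w m = (z : ℝ) := by
  have hm0 : 0 < m := by omega
  have hmR : (m : ℝ) ≠ 0 := Nat.cast_ne_zero.mpr (by omega)
  set N : ℕ := ∑ b ∈ Finset.Ico 1 m, (w * b % m) * b with hN
  have hdvd : m ∣ 6 * N := by
    rw [← ZMod.natCast_eq_zero_iff, hN]
    push_cast
    have h1 : ∀ b ∈ Finset.Ico 1 m, ((w * b % m : ℕ) : ZMod m) * (b : ZMod m)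
        = (w : ZMod m) * b * b := by
      intro b _
      rw [ZMod.natCast_mod]
      push_cast
      ring
    rw [Finset.sum_congr rfl h1]
    have h2 : ∑ b ∈ Finset.Ico 1 m, (w : ZMod m) * b * b
        = (w : ZMod m) * ∑ b ∈ Finset.range m, ((b : ℕ) : ZMod m) ^ 2 := by
      rw [aux_split m hm0 (fun b => ((b : ℕ) : ZMod m) ^ 2)]
      have h0 : ((0 : ℕ) : ZMod m) ^ 2 = 0 := by norm_num
      rw [h0, zero_add, Finset.mul_sum]
      exact Finset.sum_congr rfl fun b _ => by ring
    rw [h2]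
    have h3 : (6 : ZMod m) * ∑ b ∈ Finset.range m, ((b : ℕ) : ZMod m) ^ 2 = 0 := by
      have hc := congrArg (Int.cast : ℤ → ZMod m) (aux_six_sum_sq m)
      push_cast at hc
      rw [ZMod.natCast_self] at hc
      rw [hc]
      ring
    calc (6 : ZMod m) * ((w : ZMod m) * ∑ b ∈ Finset.range m, ((b : ℕ) : ZMod m) ^ 2)
        = (w : ZMod m) * ((6 : ZMod m) * ∑ b ∈ Finset.range m, ((b : ℕ) : ZMod m) ^ 2) := by ring
      _ = 0 := by rw [h3, mul_zero]
  have heven : 2 ∣ m * (m - 1) := by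
    rcases Nat.even_or_odd m with h | h
    · exact Dvd.dvd.mul_right h.two_dvd _
    · have : Even (m - 1) := by rcases h with ⟨t, ht⟩; exact ⟨t, by omega⟩
      exact Dvd.dvd.mul_left this.two_dvd _
  obtain ⟨t, ht⟩ := hdvd
  obtain ⟨u, hu⟩ := heven
  refine ⟨(t : ℤ) - 3 * u, ?_⟩
  have htR : 6 * (N : ℝ) = m * t := by exact_mod_cast congrArg (Nat.cast : ℕ → ℝ) ht
  have huR : (m : ℝ) ^ 2 - m = 2 * u := by
    have hc := congrArg (Nat.cast : ℕ → ℝ) hu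
    push_cast [Nat.cast_sub (show 1 ≤ m by omega)] at hc
    linear_combination hc
  rw [dedekindSum]
  have hcast : ∀ k ∈ Finset.Ico 1 m,
      Real.cot (Real.pi * k / m) * Real.cot (Real.pi * ((k : ℝ) * w) / m)
      = Real.cot (Real.pi * k / m) * Real.cot (Real.pi * ((k * w : ℕ) : ℝ) / m) := by
    intro k _
    norm_num
  rw [Finset.sum_congr rfl hcast, aux_main m w hm hw0 hwm hcop, ← hN]
  push_cast
  field_simp
  linear_combination 4 * htR - 6 * (m:ℝ) * huR
end

section
/- Let m ≥ 2, w coprime to m with 0 < w < m, and let w' be the inverse of w mod m with 0 < w' < m. Then the quantity 2 - (w + w')/m + 12·s(w; m) is an integer, where s(w; m) is the Dedekind sum. -/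
open Finset Complex

lemma tele (z : ℂ) (n : ℕ) :
    ∑ a ∈ range n, (a:ℂ) * (z^(a+1) - z^a)
      = ((n:ℂ)-1) * z^n - ∑ a ∈ range n, z^a + 1 := by
  induction n with
  | zero => simp
  | succ n ih =>
    rw [sum_range_succ, ih, sum_range_succ]
    push_cast
    ring

lemma geom_zero {m : ℕ} (z : ℂ) (hz : z^m = 1) (hz1 : z ≠ 1) :
    ∑ a ∈ range m, z^a = 0 := by
  rw [geom_sum_eq hz1, hz]; simp

lemma L1 {m : ℕ} (hm : 0 < m) (z : ℂ) (hz : z^m = 1) (hz1 : z ≠ 1) :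
    (z+1)/(z-1) = (2/(m:ℂ)) * ∑ a ∈ range m, (a:ℂ) * z^a + 1 := by
  have hz1' : z - 1 ≠ 0 := sub_ne_zero.mpr hz1
  have hm' : (m:ℂ) ≠ 0 := Nat.cast_ne_zero.mpr hm.ne'
  have h2 : ∑ a ∈ range m, (a:ℂ) * (z^(a+1) - z^a) = m := by
    rw [tele, hz, geom_zero z hz hz1]; ring
  have h3 : ∑ a ∈ range m, (a:ℂ) * (z^(a+1) - z^a)
      = (∑ a ∈ range m, (a:ℂ) * z^a) * (z - 1) := by
    rw [Finset.sum_mul]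
    exact Finset.sum_congr rfl fun a _ => by ring
  have h4 : (∑ a ∈ range m, (a:ℂ) * z^a) * (z - 1) = m := h3.symm.trans h2
  field_simp
  linear_combination (-2) * h4

lemma geomIco {m : ℕ} (hm : 0 < m) (z : ℂ) (hz : z^m = 1) :
    ∑ k ∈ Ico 1 m, z^k = (if z = 1 then (m:ℂ) else 0) - 1 := by
  have h0 : ∑ k ∈ range m, z^k = if z = 1 then (m:ℂ) else 0 := by
    split_ifs with h
    · subst h; simp
    · rw [geom_sum_eq h, hz]; simp
  rw [range_eq_Ico, Finset.sum_eq_sum_Ico_succ_bot (by omega)] at h0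
  simp only [pow_zero] at h0
  linear_combination h0

lemma cot_complex (θ : ℝ) (hs : Real.sin θ ≠ 0) :
    (Real.cot θ : ℂ) = I * (Complex.exp (2*θ*I) + 1) / (Complex.exp (2*θ*I) - 1) := by
  set c : ℂ := (Real.cos θ : ℂ) with hc
  set s : ℂ := (Real.sin θ : ℂ) with hsdef
  have he : Complex.exp (2*θ*I) = (c + s * I)^2 := by
    rw [show (2*(θ:ℂ)*I) = (θ:ℂ)*I + (θ:ℂ)*I by ring, Complex.exp_add, Complex.exp_mul_I]
    rw [hc, hsdef, Complex.ofReal_cos, Complex.ofReal_sin]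
    ring
  have hpy : c^2 + s^2 = 1 := by
    rw [hc, hsdef]
    norm_cast
    exact_mod_cast Real.cos_sq_add_sin_sq θ
  have hd : Complex.exp (2*θ*I) - 1 = 2*s*(I*c - s) := by
    rw [he]
    linear_combination hpy + s^2 * Complex.I_sq
  have h2 : s ≠ 0 := by rw [hsdef]; exact_mod_cast hs
  have hne : Complex.exp (2*θ*I) - 1 ≠ 0 := by
    rw [hd]
    have h1 : (I*c - s) ≠ 0 := by
      intro h
      have hu : (I*c - s) * (-(I*c) - s) = 1 := by
        linear_combination hpy - c^2 * Complex.I_sq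
      rw [h, zero_mul] at hu
      exact one_ne_zero hu.symm
    exact mul_ne_zero (mul_ne_zero two_ne_zero h2) h1
  rw [Real.cot_eq_cos_div_sin, Complex.ofReal_div, ← hc, ← hsdef]
  rw [div_eq_div_iff h2 hne, he]
  linear_combination (c + s*I) * hpy - (c*s^2 + s^3*I) * Complex.I_sq

lemma sin_ne (m j : ℕ) (hm : 0 < m) (hj : ¬ (m ∣ j)) : Real.sin (Real.pi * j / m) ≠ 0 := by
  intro h
  rw [Real.sin_eq_zero_iff] at h
  obtain ⟨n, hn⟩ := h
  have hm' : (m:ℝ) ≠ 0 := Nat.cast_ne_zero.mpr hm.ne'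
  have hpi := Real.pi_ne_zero
  have h1 : Real.pi * ((n:ℝ) * m) = Real.pi * j := by
    field_simp at hn
    linear_combination Real.pi * hn
  have h2 : (n:ℝ) * m = j := mul_left_cancel₀ hpi h1
  have hz : (n * m : ℤ) = (j:ℤ) := by exact_mod_cast h2
  exact hj (Int.ofNat_dvd.mp ⟨n, by rw [← hz]; ring⟩)

lemma exp_two (m j : ℕ) (hm : 0 < m) :
    Complex.exp (2 * (Real.pi * j / m : ℝ) * I) = Complex.exp (2 * Real.pi * I / m) ^ j := by
  rw [← Complex.exp_nat_mul]
  congr 1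
  have hm' : (m:ℂ) ≠ 0 := Nat.cast_ne_zero.mpr hm.ne'
  push_cast
  field_simp

lemma u_dvd (m w b : ℕ) (hm : 0 < m) : m ∣ (m - (b*w) % m) % m + b*w := by
  set r := b*w % m with hr
  have hrm : r < m := Nat.mod_lt _ hm
  have h1 : (m - r) % m + b*w ≡ (m - r) + r [MOD m] :=
    Nat.ModEq.add (Nat.mod_modEq (m - r) m) (Nat.mod_modEq (b*w) m).symm
  have h2 : m - r + r = m := by omega
  rw [h2] at h1
  exact (Nat.modEq_zero_iff_dvd).mp (h1.trans (Nat.modEq_zero_iff_dvd.mpr dvd_rfl))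

lemma u_uniq (m w b a : ℕ) (hm : 0 < m) (ha : a < m) (hd : m ∣ a + b*w) :
    a = (m - (b*w) % m) % m := by
  have h1 := u_dvd m w b hm
  have h2 : a + b*w ≡ (m - (b*w) % m) % m + b*w [MOD m] :=
    (Nat.modEq_zero_iff_dvd.mpr hd).trans (Nat.modEq_zero_iff_dvd.mpr h1).symm
  have h3 : a ≡ (m - (b*w) % m) % m [MOD m] := h2.add_right_cancel' _
  have h4 : (m - (b*w) % m) % m < m := Nat.mod_lt _ hm
  have h5 := h3
  unfold Nat.ModEq at h5
  rwa [Nat.mod_eq_of_lt ha, Nat.mod_eq_of_lt h4] at h5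

lemma partA (m w : ℕ) (hm : 2 ≤ m) (hcop : Nat.Coprime w m) :
    dedekindSum w m
      = ((∑ k ∈ Ico 1 m, k * (k*w % m) : ℕ) : ℝ) / (m:ℝ)^2 - ((m:ℝ) - 1)/4 := by
  have hm0 : 0 < m := by omega
  have hmC : (m:ℂ) ≠ 0 := Nat.cast_ne_zero.mpr hm0.ne'
  set S : ℕ := ∑ k ∈ Ico 1 m, k * (k*w % m) with hS
  set ζ : ℂ := Complex.exp (2 * Real.pi * I / m) with hζ
  have hprim : IsPrimitiveRoot ζ m := Complex.isPrimitiveRoot_exp m hm0.ne'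
  have hζm : ζ ^ m = 1 := hprim.pow_eq_one
  have hζiff : ∀ j : ℕ, ζ ^ j = 1 ↔ m ∣ j := fun j => hprim.pow_eq_one_iff_dvd j
  -- A and B
  set A : ℕ → ℂ := fun k => ∑ a ∈ range m, (a:ℂ) * (ζ^k)^a with hA
  set B : ℕ → ℂ := fun k => ∑ b ∈ range m, (b:ℂ) * (ζ^(k*w))^b with hB
  have hndvd : ∀ k ∈ Ico 1 m, ¬ (m ∣ k) := by
    intro k hk
    rw [mem_Ico] at hk
    intro hd
    have := Nat.le_of_dvd (by omega) hd
    omega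
  have hndvdw : ∀ k ∈ Ico 1 m, ¬ (m ∣ k*w) := by
    intro k hk hd
    exact hndvd k hk (hcop.symm.dvd_of_dvd_mul_right hd)
  -- pointwise cotangent formula
  have key : ∀ k ∈ Ico 1 m,
      ((Real.cot (Real.pi * k / m) : ℝ) : ℂ) * ((Real.cot (Real.pi * (k*w : ℕ) / m) : ℝ) : ℂ)
        = -(((2/(m:ℂ)) * A k + 1) * ((2/(m:ℂ)) * B k + 1)) := by
    intro k hk
    have h1 : ¬ (m ∣ k) := hndvd k hk
    have h2 : ¬ (m ∣ k*w) := hndvdw k hk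
    have c1 : ((Real.cot (Real.pi * k / m) : ℝ) : ℂ) = I * ((2/(m:ℂ)) * A k + 1) := by
      rw [cot_complex _ (sin_ne m k hm0 h1), exp_two m k hm0]
      rw [mul_div_assoc]
      congr 1
      have hz1 : ζ^k ≠ 1 := fun h => h1 ((hζiff k).mp h)
      have hzm : (ζ^k)^m = 1 := by rw [← pow_mul, mul_comm, pow_mul, hζm, one_pow]
      exact L1 hm0 _ hzm hz1
    have c2 : ((Real.cot (Real.pi * (k*w : ℕ) / m) : ℝ) : ℂ) = I * ((2/(m:ℂ)) * B k + 1) := by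
      rw [cot_complex _ (sin_ne m (k*w) hm0 h2), exp_two m (k*w) hm0]
      rw [mul_div_assoc]
      congr 1
      have hz1 : ζ^(k*w) ≠ 1 := fun h => h2 ((hζiff _).mp h)
      have hzm : (ζ^(k*w))^m = 1 := by rw [← pow_mul, mul_comm, pow_mul, hζm, one_pow]
      exact L1 hm0 _ hzm hz1
    rw [c1, c2]
    linear_combination (((2/(m:ℂ)) * A k + 1) * ((2/(m:ℂ)) * B k + 1)) * Complex.I_sq
  set G : ℂ := ∑ a ∈ range m, (a:ℂ) with hG
  have hpowm : ∀ j : ℕ, (ζ^j)^m = 1 := fun j => by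
    rw [← pow_mul, mul_comm, pow_mul, hζm, one_pow]
  have hζne : ∀ a : ℕ, a < m → a ≠ 0 → ζ^a ≠ 1 := by
    intro a ha ha0 h
    exact ha0 (Nat.eq_zero_of_dvd_of_lt ((hζiff a).mp h) ha)
  -- sum of A
  have hSA : ∑ k ∈ Ico 1 m, A k = -G := by
    simp only [hA]
    rw [Finset.sum_comm]
    have step : ∀ a ∈ range m, ∑ k ∈ Ico 1 m, (a:ℂ) * (ζ^k)^a = -(a:ℂ) := by
      intro a ha
      rw [mem_range] at ha
      have hpc : ∀ k, (a:ℂ) * (ζ^k)^a = (a:ℂ) * (ζ^a)^k := fun k => by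
        rw [← pow_mul, ← pow_mul, mul_comm k a]
      simp only [hpc]
      rw [← Finset.mul_sum, geomIco hm0 _ (hpowm a)]
      by_cases h : a = 0
      · subst h; simp
      · rw [if_neg (hζne a ha h)]; ring
    rw [Finset.sum_congr rfl step, Finset.sum_neg_distrib, hG]
  -- sum of B
  have hSB : ∑ k ∈ Ico 1 m, B k = -G := by
    simp only [hB]
    rw [Finset.sum_comm]
    have step : ∀ b ∈ range m, ∑ k ∈ Ico 1 m, (b:ℂ) * (ζ^(k*w))^b = -(b:ℂ) := by
      intro b hb
      rw [mem_range] at hb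
      have hpc : ∀ k, (b:ℂ) * (ζ^(k*w))^b = (b:ℂ) * (ζ^(b*w))^k := fun k => by
        rw [← pow_mul, ← pow_mul]
        congr 2
        ring
      simp only [hpc]
      rw [← Finset.mul_sum, geomIco hm0 _ (hpowm (b*w))]
      by_cases h : b = 0
      · subst h; simp
      · have hnd : ¬ (m ∣ b*w) := by
          intro hd
          exact h (Nat.eq_zero_of_dvd_of_lt (hcop.symm.dvd_of_dvd_mul_right hd) hb)
        have : ζ^(b*w) ≠ 1 := fun hh => hnd ((hζiff _).mp hh)
        rw [if_neg this]; ring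
    rw [Finset.sum_congr rfl step, Finset.sum_neg_distrib, hG]
  -- sum of A*B
  have hSAB : ∑ k ∈ Ico 1 m, A k * B k
      = (m:ℂ) * (∑ b ∈ range m, (b:ℂ) * (((m - (b*w) % m) % m : ℕ) : ℂ)) - G^2 := by
    have step1 : ∀ k ∈ Ico 1 m, A k * B k
        = ∑ a ∈ range m, ∑ b ∈ range m, ((a:ℂ)*(b:ℂ)) * (ζ^(a+b*w))^k := by
      intro k _
      simp only [hA, hB]
      rw [Finset.sum_mul_sum]
      refine Finset.sum_congr rfl fun a _ => Finset.sum_congr rfl fun b _ => ?_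
      have hz : (ζ^k)^a * (ζ^(k*w))^b = (ζ^(a+b*w))^k := by
        rw [← pow_mul, ← pow_mul, ← pow_mul, ← pow_add]
        congr 1
        ring
      calc ((a:ℂ) * (ζ^k)^a) * ((b:ℂ)*(ζ^(k*w))^b)
          = ((a:ℂ)*(b:ℂ)) * ((ζ^k)^a * (ζ^(k*w))^b) := by ring
        _ = ((a:ℂ)*(b:ℂ)) * (ζ^(a+b*w))^k := by rw [hz]
    rw [Finset.sum_congr rfl step1]
    rw [Finset.sum_comm]
    have step2 : ∀ a ∈ range m, ∑ k ∈ Ico 1 m, ∑ b ∈ range m, ((a:ℂ)*(b:ℂ)) * (ζ^(a+b*w))^k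
        = ∑ b ∈ range m, ((a:ℂ)*(b:ℂ)) * ((if m ∣ a+b*w then (m:ℂ) else 0) - 1) := by
      intro a _
      rw [Finset.sum_comm]
      refine Finset.sum_congr rfl fun b _ => ?_
      rw [← Finset.mul_sum, geomIco hm0 _ (hpowm (a+b*w))]
      congr 2
      exact if_congr (hζiff _) rfl rfl
    rw [Finset.sum_congr rfl step2]
    have split : ∀ a ∈ range m, ∑ b ∈ range m, ((a:ℂ)*(b:ℂ)) * ((if m ∣ a+b*w then (m:ℂ) else 0) - 1)
        = (∑ b ∈ range m, ((a:ℂ)*(b:ℂ)) * (if m ∣ a+b*w then (m:ℂ) else 0)) - (a:ℂ) * G := by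
      intro a _
      calc ∑ b ∈ range m, ((a:ℂ)*(b:ℂ)) * ((if m ∣ a+b*w then (m:ℂ) else 0) - 1)
          = ∑ b ∈ range m, (((a:ℂ)*(b:ℂ)) * (if m ∣ a+b*w then (m:ℂ) else 0) - (a:ℂ)*(b:ℂ)) :=
            Finset.sum_congr rfl fun b _ => by ring
        _ = (∑ b ∈ range m, ((a:ℂ)*(b:ℂ)) * (if m ∣ a+b*w then (m:ℂ) else 0))
              - ∑ b ∈ range m, (a:ℂ)*(b:ℂ) := Finset.sum_sub_distrib _ _
        _ = (∑ b ∈ range m, ((a:ℂ)*(b:ℂ)) * (if m ∣ a+b*w then (m:ℂ) else 0)) - (a:ℂ) * G := by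
            rw [hG, Finset.mul_sum]
    rw [Finset.sum_congr rfl split, Finset.sum_sub_distrib]
    have e2 : ∑ a ∈ range m, (a:ℂ) * G = G^2 := by
      rw [← Finset.sum_mul, hG]; ring
    rw [e2]
    congr 1
    rw [Finset.sum_comm]
    have inner : ∀ b ∈ range m, ∑ a ∈ range m, ((a:ℂ)*(b:ℂ)) * (if m ∣ a+b*w then (m:ℂ) else 0)
        = (b:ℂ) * (((m - (b*w) % m) % m : ℕ) : ℂ) * (m:ℂ) := by
      intro b _
      set u : ℕ := (m - (b*w) % m) % m with hu
      rw [Finset.sum_eq_single_of_mem u (mem_range.mpr (Nat.mod_lt _ hm0))]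
      · rw [if_pos (u_dvd m w b hm0)]
        ring
      · intro c hc hne
        rw [if_neg, mul_zero]
        intro hd
        exact hne (u_uniq m w b c hm0 (mem_range.mp hc) hd)
    rw [Finset.sum_congr rfl inner, Finset.mul_sum]
    exact Finset.sum_congr rfl fun b _ => by ring
  -- Gauss sum
  have hGval : G = (m:ℂ) * ((m:ℂ) - 1) / 2 := by
    have h := Finset.sum_range_id_mul_two m
    have h2 : ((∑ i ∈ range m, i : ℕ) : ℂ) * 2 = (m:ℂ) * (((m - 1 : ℕ) : ℕ):ℂ) := by
      exact_mod_cast congrArg (Nat.cast : ℕ → ℂ) h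
    rw [Nat.cast_sub (by omega : 1 ≤ m)] at h2
    rw [hG]
    push_cast at h2 ⊢
    field_simp
    linear_combination h2
  have hGIco : ∑ b ∈ Ico 1 m, (b:ℂ) = G := by
    rw [hG, range_eq_Ico, Finset.sum_eq_sum_Ico_succ_bot hm0]
    simp
  -- bridge to S
  have hbridge : ∑ b ∈ range m, (b:ℂ) * (((m - (b*w) % m) % m : ℕ):ℂ)
      = (m:ℂ) * G - (S:ℂ) := by
    rw [range_eq_Ico, Finset.sum_eq_sum_Ico_succ_bot hm0]
    simp only [Nat.cast_zero, zero_mul, zero_add]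
    have step : ∀ b ∈ Ico 1 m, (b:ℂ) * (((m - (b*w) % m) % m : ℕ):ℂ)
        = (m:ℂ)*(b:ℂ) - (b:ℂ)*(((b*w) % m : ℕ):ℂ) := by
      intro b hb
      rw [mem_Ico] at hb
      have hr : (b*w) % m < m := Nat.mod_lt _ hm0
      have hr0 : (b*w) % m ≠ 0 := by
        intro h0
        have hd : m ∣ b := hcop.symm.dvd_of_dvd_mul_right (Nat.dvd_of_mod_eq_zero h0)
        have := Nat.le_of_dvd (by omega) hd
        omega
      have h1 : (m - (b*w) % m) % m = m - (b*w) % m := Nat.mod_eq_of_lt (by omega)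
      rw [h1, Nat.cast_sub (le_of_lt hr)]
      ring
    rw [Finset.sum_congr rfl step, Finset.sum_sub_distrib, ← Finset.mul_sum, hGIco]
    congr 1
    rw [hS]
    push_cast
    refine Finset.sum_congr rfl fun b hb => by norm_cast
  -- the main complex sum
  have hT : ∑ k ∈ Ico 1 m, ((Real.cot (Real.pi * k / m) : ℝ) : ℂ) * ((Real.cot (Real.pi * (k*w : ℕ) / m) : ℝ) : ℂ)
      = 4*(S:ℂ)/(m:ℂ) - (m:ℂ)*((m:ℂ)-1) := by
    rw [Finset.sum_congr rfl key]
    have expand : ∀ k ∈ Ico 1 m, -(((2/(m:ℂ)) * A k + 1) * ((2/(m:ℂ)) * B k + 1))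
        = (-(4/(m:ℂ)^2)) * (A k * B k) + ((-(2/(m:ℂ))) * A k + ((-(2/(m:ℂ))) * B k + (-1))) :=
      fun k _ => by ring
    rw [Finset.sum_congr rfl expand]
    rw [Finset.sum_add_distrib, Finset.sum_add_distrib, Finset.sum_add_distrib]
    rw [← Finset.mul_sum, ← Finset.mul_sum, ← Finset.mul_sum]
    rw [hSAB, hSA, hSB, hbridge, Finset.sum_const, Nat.card_Ico]
    rw [hGval]
    have hcast : ((m - 1 : ℕ) : ℂ) = (m:ℂ) - 1 := by
      rw [Nat.cast_sub (by omega : 1 ≤ m)]; norm_num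
    simp only [nsmul_eq_mul, hcast]
    field_simp
    ring
  -- back to the reals
  have harg : ∀ k : ℕ, Real.pi * ((k:ℝ) * (w:ℝ)) / m = Real.pi * ((k*w : ℕ):ℝ) / m := by
    intro k; push_cast; ring
  have hTreal : (∑ k ∈ Ico 1 m, Real.cot (Real.pi * k / m) * Real.cot (Real.pi * ((k:ℝ) * (w:ℝ)) / m))
      = 4*(S:ℝ)/(m:ℝ) - (m:ℝ)*((m:ℝ)-1) := by
    simp only [harg]
    rw [← Complex.ofReal_inj]
    push_cast
    rw [← hT]
    push_cast
    rfl
  rw [dedekindSum]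
  rw [hTreal]
  have hmR : (m:ℝ) ≠ 0 := Nat.cast_ne_zero.mpr hm0.ne'
  field_simp


lemma bij_sum (m w w' : ℕ) (hm : 2 ≤ m) (hcop : Nat.Coprime w m)
    (hw'm : w' < m) (hww' : w * w' ≡ 1 [MOD m]) (f : ℕ → ℤ) :
    ∑ k ∈ Ico 1 m, f (k*w % m) = ∑ k ∈ Ico 1 m, f k := by
  have hm0 : 0 < m := by omega
  have hww'' : w' * w ≡ 1 [MOD m] := by rwa [mul_comm] at hww'
  have hmem : ∀ (v : ℕ), Nat.Coprime v m → ∀ k ∈ Ico 1 m, k * v % m ∈ Ico 1 m := by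
    intro v hv k hk
    rw [mem_Ico] at hk ⊢
    refine ⟨?_, Nat.mod_lt _ hm0⟩
    rcases Nat.eq_zero_or_pos (k * v % m) with h0 | h1
    · exfalso
      have hd : m ∣ k := hv.symm.dvd_of_dvd_mul_right (Nat.dvd_of_mod_eq_zero h0)
      have := Nat.le_of_dvd (by omega) hd
      omega
    · exact h1
  have hcop' : Nat.Coprime w' m := by
    have h1m : 1 % m = 1 := Nat.mod_eq_of_lt (by omega)
    have : m * (w * w' / m) + 1 = w * w' := by
      conv_rhs => rw [← Nat.div_add_mod (w * w') m]
      rw [hww', h1m]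
    apply Nat.coprime_of_mul_modEq_one w
    rwa [mul_comm] at hww'
  have hinv : ∀ (u v : ℕ), u * v ≡ 1 [MOD m] → ∀ k ∈ Ico 1 m, (k * u % m) * v % m = k := by
    intro u v huv k hk
    rw [mem_Ico] at hk
    have h1 : (k * u % m) * v ≡ (k * u) * v [MOD m] := (Nat.mod_modEq (k*u) m).mul_right v
    have h2 : (k * u) * v = k * (u * v) := by ring
    have h3 : k * (u * v) ≡ k * 1 [MOD m] := huv.mul_left k
    have h4 : (k * u % m) * v ≡ k [MOD m] := by
      rw [h2] at h1
      have := h1.trans h3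
      rwa [mul_one] at this
    unfold Nat.ModEq at h4
    rw [h4]
    exact Nat.mod_eq_of_lt hk.2
  refine Finset.sum_nbij' (fun k => k * w % m) (fun k => k * w' % m)
    (hmem w hcop) (hmem w' hcop') ?_ ?_ ?_
  · intro k hk; exact hinv w w' hww' k hk
  · intro k hk; exact hinv w' w hww'' k hk
  · intro k _; rfl

lemma sq_sum_formula (n : ℕ) : 6 * ∑ k ∈ range n, (k:ℤ)^2 = n*(n-1)*(2*n-1) := by
  induction n with
  | zero => simp
  | succ n ih =>
    rw [sum_range_succ, mul_add, ih]
    push_cast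
    ring

lemma partB (m w w' : ℕ) (hm : 2 ≤ m) (hcop : Nat.Coprime w m)
    (hw'm : w' < m) (hww' : w * w' ≡ 1 [MOD m]) :
    (m:ℤ)^2 ∣ 12 * ((∑ k ∈ Ico 1 m, k * (k*w % m) : ℕ) : ℤ) - m*(w+w') := by
  have hm0 : 0 < m := by omega
  set S : ℕ := ∑ k ∈ Ico 1 m, k * (k*w % m) with hS
  set K2 : ℤ := ∑ k ∈ Ico 1 m, (k:ℤ)^2 with hK2def
  set Q : ℤ := ∑ k ∈ Ico 1 m, ((k*w/m : ℕ):ℤ)^2 with hQdef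
  -- sum of squares of residues equals sum of squares
  have hsq : (∑ k ∈ Ico 1 m, ((k*w % m : ℕ):ℤ)^2) = K2 := by
    have := bij_sum m w w' hm hcop hw'm hww' (fun x => (x:ℤ)^2)
    simpa using this
  -- main algebraic identity
  have hS2 : 2*(w:ℤ)*(S:ℤ) = ((w:ℤ)^2+1)*K2 - (m:ℤ)^2*Q := by
    have cast : (S:ℤ) = ∑ k ∈ Ico 1 m, (k:ℤ)*((k*w%m : ℕ):ℤ) := by
      rw [hS]; push_cast; rfl
    have point : ∀ k ∈ Ico 1 m, 2*(w:ℤ)*((k:ℤ)*((k*w%m : ℕ):ℤ))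
        = ((w:ℤ)^2*(k:ℤ)^2 + ((k*w%m : ℕ):ℤ)^2) - (m:ℤ)^2*((k*w/m : ℕ):ℤ)^2 := by
      intro k _
      have hdm : (m:ℤ)*((k*w/m : ℕ):ℤ) + ((k*w%m : ℕ):ℤ) = (k:ℤ)*(w:ℤ) := by
        exact_mod_cast Nat.div_add_mod (k*w) m
      linear_combination ((m:ℤ)*((k*w/m : ℕ):ℤ) + (k:ℤ)*(w:ℤ) - ((k*w%m : ℕ):ℤ)) * hdm
    rw [cast, Finset.mul_sum, Finset.sum_congr rfl point, Finset.sum_sub_distrib,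
      Finset.sum_add_distrib, ← Finset.mul_sum, ← Finset.mul_sum, hsq]
    ring
  have hK2 : 6*K2 = (m:ℤ)*((m:ℤ)-1)*(2*(m:ℤ)-1) := by
    rw [hK2def]
    have h0 : ∑ k ∈ range m, (k:ℤ)^2 = ∑ k ∈ Ico 1 m, (k:ℤ)^2 := by
      rw [range_eq_Ico, Finset.sum_eq_sum_Ico_succ_bot hm0]
      simp
    rw [← h0, sq_sum_formula m]
  obtain ⟨q, hq⟩ : ∃ q : ℕ, w * w' = m * q + 1 := by
    refine ⟨w * w' / m, ?_⟩
    have h1m : 1 % m = 1 := Nat.mod_eq_of_lt (by omega)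
    conv_lhs => rw [← Nat.div_add_mod (w * w') m]
    rw [hww', h1m]
  have hqZ : (w:ℤ) * (w':ℤ) = (m:ℤ) * (q:ℤ) + 1 := by exact_mod_cast hq
  have h12 : 12*(w:ℤ)*(S:ℤ) = ((w:ℤ)^2+1)*((m:ℤ)*((m:ℤ)-1)*(2*(m:ℤ)-1)) - 6*(m:ℤ)^2*Q := by
    linear_combination 6*hS2 + ((w:ℤ)^2+1)*hK2
  have hfin : (w:ℤ) * (12*(S:ℤ) - (m:ℤ)*((w:ℤ)+(w':ℤ)))
      = (m:ℤ)^2 * (((w:ℤ)^2+1)*(2*(m:ℤ)-3) - (q:ℤ) - 6*Q) := by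
    linear_combination h12 - (m:ℤ)*hqZ
  have hco : IsCoprime ((m:ℤ)^2) (w:ℤ) :=
    ((Nat.isCoprime_iff_coprime.mpr hcop).symm.pow_left)
  have hdvd : (m:ℤ)^2 ∣ (w:ℤ) * (12*(S:ℤ) - (m:ℤ)*((w:ℤ)+(w':ℤ))) :=
    ⟨_, hfin⟩
  exact hco.dvd_of_dvd_mul_left hdvd

/-- For `m ≥ 2`, `w` coprime to `m` with `0 < w < m`, and `w'` the
    inverse of `w` mod `m` with `0 < w' < m`, the quantity
    `2 - (w + w')/m + 12·s(w;m)` is an integer. -/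
theorem orbifold_contribution_isInt
    (m w w' : ℕ) (hm : 2 ≤ m) (hw0 : 0 < w) (hwm : w < m) (hcop : Nat.Coprime w m)
    (hw'0 : 0 < w') (hw'm : w' < m) (hww' : w * w' ≡ 1 [MOD m]) :
    ∃ z : ℤ, 2 - ((w : ℝ) + (w' : ℝ)) / m + 12 * dedekindSum w m = (z : ℝ) := by
  obtain ⟨d, hd⟩ := partB m w w' hm hcop hw'm hww'
  refine ⟨d + 5 - 3*m, ?_⟩
  rw [partA m w hm hcop]
  have hmR : (m:ℝ) ≠ 0 := Nat.cast_ne_zero.mpr (by omega)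
  have hdR : 12 * ((∑ k ∈ Ico 1 m, k * (k*w % m) : ℕ):ℝ) - (m:ℝ)*((w:ℝ)+(w':ℝ))
      = (m:ℝ)^2 * (d:ℝ) := by
    exact_mod_cast congrArg (Int.cast : ℤ → ℝ) hd
  push_cast at hdR ⊢
  field_simp
  linear_combination 4*hdR
end
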